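/- For every positive integer k there exists a finite simple directed graph G_k on 5k+1 vertices in which every vertex has in-degree at least one, such that every strict majority dynamic monopoly of G_k contains at least 2k vertices. Consequently, no upper bound of the form c·n with c < 2/5 (up to additive o(n) terms) can hold for the smallest strict majority dynamic monopoly of all n-vertex simple directed graphs with positive minimum in-degree. -/

import Mathlib

/-!
Basic notions for dynamic monopolies in finite directed graphs.
A directed graph on a vertex type `V` is given by its adjacency relation
`Adj : V → V → Prop`, where `Adj u v` means there is an edge from `u` to `v`.
-/

variable {V : Type*}

/-- The in-degree of a vertex `v`: the number of vertices `u` with an edge from `u` to `v`. -/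
noncomputable def inDeg (Adj : V → V → Prop) (v : V) : ℕ :=
  {u | Adj u v}.ncard

/-- A directed graph is simple: no loops, and no two oppositely directed edges
between the same pair of vertices. -/
def IsSimple (Adj : V → V → Prop) : Prop :=
  Irreflexive Adj ∧ ∀ u v, Adj u v → ¬ Adj v u

/-- A directed graph is strongly connected if any vertex is reachable from any other
by a directed path. -/
def StronglyConnected (Adj : V → V → Prop) : Prop :=
  ∀ u v : V, Relation.ReflTransGen Adj u v

/-- `M` is a dynamic monopoly (dynamo) for `(G, τ)`: the vertex set can be partitioned
into levels `D_0 = M, D_1, …, D_t` (encoded by a level function) such that every vertex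
`v` of level `i ≥ 1` receives at least `τ v` edges from vertices of smaller level. -/
def IsDynamo (Adj : V → V → Prop) (τ : V → ℕ) (M : Set V) : Prop :=
  ∃ level : V → ℕ,
    (∀ v, level v = 0 ↔ v ∈ M) ∧
    ∀ v, 1 ≤ level v → τ v ≤ {u | Adj u v ∧ level u < level v}.ncard

/-- The strict majority threshold `⌈(deg^in(v)+1)/2⌉` (as a natural number,
`(d + 2) / 2 = ⌈(d+1)/2⌉`). -/
noncomputable def strictMajority (Adj : V → V → Prop) (v : V) : ℕ :=
  (inDeg Adj v + 2) / 2

/-- The `f`-value of a vertex `v` with respect to an ordering `σ` of the vertices: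
the number of in-neighbours of `v` appearing after `v` minus the number of
in-neighbours of `v` appearing before `v`. -/
noncomputable def fval [Fintype V] (Adj : V → V → Prop)
    (σ : V ≃ Fin (Fintype.card V)) (v : V) : ℤ :=
  ({u | Adj u v ∧ σ v < σ u}.ncard : ℤ) - ({u | Adj u v ∧ σ u < σ v}.ncard : ℤ)

/-- The graph `G_k`. -/
def gAdj (k : ℕ) (u v : Fin (5 * k + 1)) : Prop :=
  ((u : ℕ) < 5 * k ∧ (v : ℕ) < 5 * k ∧ (u : ℕ) / 5 = (v : ℕ) / 5 ∧
    ((v : ℕ) % 5 = ((u : ℕ) % 5 + 1) % 5 ∨ (v : ℕ) % 5 = ((u : ℕ) % 5 + 2) % 5)) ∨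
  ((u : ℕ) < 5 * k ∧ (u : ℕ) % 5 = 0 ∧ (v : ℕ) = 5 * k)

lemma gAdj_simple (k : ℕ) : IsSimple (gAdj k) := by
  constructor
  · intro v h
    rcases h with ⟨h1, h2, h3, h4⟩ | ⟨h1, h2, h3⟩ <;> omega
  · intro u v h h'
    rcases h with ⟨h1, h2, h3, h4⟩ | ⟨h1, h2, h3⟩ <;>
      rcases h' with ⟨g1, g2, g3, g4⟩ | ⟨g1, g2, g3⟩ <;> omega

lemma two_le_inDeg (k : ℕ) (v : Fin (5 * k + 1)) (hv : (v : ℕ) < 5 * k) :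
    2 ≤ inDeg (gAdj k) v := by
  set q := (v : ℕ) / 5 with hq
  set r := (v : ℕ) % 5 with hr
  have h1 : 5 * q + (r + 4) % 5 < 5 * k + 1 := by omega
  have h2 : 5 * q + (r + 3) % 5 < 5 * k + 1 := by omega
  set u1 : Fin (5 * k + 1) := ⟨5 * q + (r + 4) % 5, h1⟩ with hu1
  set u2 : Fin (5 * k + 1) := ⟨5 * q + (r + 3) % 5, h2⟩ with hu2
  have hv1 : (u1 : ℕ) = 5 * q + (r + 4) % 5 := rfl
  have hv2 : (u2 : ℕ) = 5 * q + (r + 3) % 5 := rfl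
  have hne : u1 ≠ u2 := by
    intro h
    have := congrArg Fin.val h
    rw [hv1, hv2] at this
    omega
  have hsub : ({u1, u2} : Set (Fin (5 * k + 1))) ⊆ {u | gAdj k u v} := by
    intro u hu
    rcases hu with h | h <;> subst h
    · refine Or.inl ?_; rw [hv1]; omega
    · refine Or.inl ?_; rw [hv2]; omega
  calc 2 = ({u1, u2} : Set (Fin (5 * k + 1))).ncard := (Set.ncard_pair hne).symm
    _ ≤ _ := Set.ncard_le_ncard hsub (Set.toFinite _)

lemma one_le_inDeg (k : ℕ) (hk : 1 ≤ k) (v : Fin (5 * k + 1)) :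
    1 ≤ inDeg (gAdj k) v := by
  rcases lt_or_ge (v : ℕ) (5 * k) with hv | hv
  · exact le_trans (by norm_num) (two_le_inDeg k v hv)
  · have hv' : (v : ℕ) = 5 * k := by have := v.isLt; omega
    have h0 : (0 : ℕ) < 5 * k + 1 := by omega
    have hmem : (⟨0, h0⟩ : Fin (5 * k + 1)) ∈ {u | gAdj k u v} := by
      right
      refine ⟨?_, ?_, hv'⟩ <;> simp <;> omega
    have := (Set.ncard_pos (Set.toFinite _)).mpr ⟨_, hmem⟩
    exact this

/-- In each copy of K5, any dynamo contains at least 2 vertices. -/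
lemma copy_lemma (k : ℕ) (M : Set (Fin (5 * k + 1)))
    (hM : IsDynamo (gAdj k) (strictMajority (gAdj k)) M) (i : ℕ) (hi : i < k) :
    2 ≤ (M ∩ {v : Fin (5 * k + 1) | (v : ℕ) < 5 * k ∧ (v : ℕ) / 5 = i}).ncard := by
  classical
  obtain ⟨level, hlev0, hlev⟩ := hM
  set C : Set (Fin (5 * k + 1)) := {v | (v : ℕ) < 5 * k ∧ (v : ℕ) / 5 = i} with hC
  by_cases hall : ∀ v ∈ C, level v = 0
  · -- the whole copy is in M
    have h1 : 5 * i < 5 * k + 1 := by omega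
    have h2 : 5 * i + 1 < 5 * k + 1 := by omega
    set v1 : Fin (5 * k + 1) := ⟨5 * i, h1⟩
    set v2 : Fin (5 * k + 1) := ⟨5 * i + 1, h2⟩
    have hv1C : v1 ∈ C := by constructor <;> simp only [v1] <;> omega
    have hv2C : v2 ∈ C := by constructor <;> simp only [v2] <;> omega
    have hne : v1 ≠ v2 := by
      intro h; have := congrArg Fin.val h; simp [v1, v2] at this
    have hsub : ({v1, v2} : Set (Fin (5 * k + 1))) ⊆ M ∩ C := by
      intro u hu
      rcases hu with h | h <;> subst h
      · exact ⟨(hlev0 _).mp (hall _ hv1C), hv1C⟩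
      · exact ⟨(hlev0 _).mp (hall _ hv2C), hv2C⟩
    calc 2 = ({v1, v2} : Set (Fin (5 * k + 1))).ncard := (Set.ncard_pair hne).symm
      _ ≤ _ := Set.ncard_le_ncard hsub (Set.toFinite _)
  · push_neg at hall
    -- pick a vertex of C of minimal positive level
    set s : Finset (Fin (5 * k + 1)) :=
      Finset.univ.filter (fun v => v ∈ C ∧ 1 ≤ level v) with hs
    have hsne : s.Nonempty := by
      obtain ⟨v, hvC, hv⟩ := hall
      exact ⟨v, by simp [hs, hvC]; omega⟩
    obtain ⟨v, hvs, hvmin⟩ := s.exists_min_image level hsne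
    have hvC : v ∈ C := by simp [hs] at hvs; exact hvs.1
    have hv1 : 1 ≤ level v := by simp [hs] at hvs; exact hvs.2
    have hτ : 2 ≤ strictMajority (gAdj k) v := by
      have := two_le_inDeg k v hvC.1
      unfold strictMajority
      omega
    have hcard := le_trans hτ (hlev v hv1)
    have hsub : {u | gAdj k u v ∧ level u < level v} ⊆ M ∩ C := by
      rintro u ⟨hadj, hu⟩
      have hvlt : (v : ℕ) < 5 * k := hvC.1
      have huC : u ∈ C := by
        rcases hadj with ⟨h1, h2, h3, h4⟩ | ⟨h1, h2, h3⟩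
        · exact ⟨h1, by rw [h3]; exact hvC.2⟩
        · omega
      have hlev_u : level u = 0 := by
        by_contra h
        have : 1 ≤ level u := by omega
        have hus : u ∈ s := by simp [hs]; exact ⟨huC, this⟩
        have := hvmin u hus
        omega
      exact ⟨(hlev0 _).mp hlev_u, huC⟩
    exact le_trans hcard (Set.ncard_le_ncard hsub (Set.toFinite _))

/-- Counting: a dynamo has at least 2k vertices. -/
lemma dynamo_lower (k : ℕ) (M : Set (Fin (5 * k + 1)))
    (hM : IsDynamo (gAdj k) (strictMajority (gAdj k)) M) : 2 * k ≤ M.ncard := by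
  classical
  set F : ℕ → Finset (Fin (5 * k + 1)) :=
    fun i => M.toFinite.toFinset.filter (fun v => (v : ℕ) < 5 * k ∧ (v : ℕ) / 5 = i) with hF
  have hcard : ∀ i ∈ Finset.range k, 2 ≤ (F i).card := by
    intro i hi
    rw [Finset.mem_range] at hi
    have h := copy_lemma k M hM i hi
    have heq : ((M ∩ {v : Fin (5 * k + 1) | (v : ℕ) < 5 * k ∧ (v : ℕ) / 5 = i}).toFinite.toFinset) = F i := by
      ext v
      simp only [hF, Set.Finite.mem_toFinset, Finset.mem_filter, Set.mem_inter_iff,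
        Set.mem_setOf_eq, Finset.mem_univ, true_and]
    rw [Set.ncard_eq_toFinset_card _
      (M ∩ {v : Fin (5 * k + 1) | (v : ℕ) < 5 * k ∧ (v : ℕ) / 5 = i}).toFinite, heq] at h
    exact h
  have hdisj : ∀ i ∈ Finset.range k, ∀ j ∈ Finset.range k, i ≠ j → Disjoint (F i) (F j) := by
    intro i _ j _ hij
    simp only [Finset.disjoint_left, hF, Finset.mem_filter]
    rintro v ⟨_, _, h1⟩ ⟨_, _, h2⟩
    omega
  calc 2 * k = ∑ _i ∈ Finset.range k, 2 := by simp [mul_comm]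
    _ ≤ ∑ i ∈ Finset.range k, (F i).card := Finset.sum_le_sum hcard
    _ = ((Finset.range k).biUnion F).card := (Finset.card_biUnion hdisj).symm
    _ ≤ M.toFinite.toFinset.card := by
        apply Finset.card_le_card
        intro v hv
        simp only [Finset.mem_biUnion, hF, Finset.mem_filter] at hv
        obtain ⟨i, _, hv, _⟩ := hv
        exact hv
    _ = M.ncard := (Set.ncard_eq_toFinset_card M M.toFinite).symm



/-- for every `k ≥ 1` there is a simple directed graph on `5k + 1`
vertices with positive minimum in-degree whose every strict majority dynamic monopoly has
at least `2k` vertices. Consequently, no upper bound `c·n + o(n)` with `c < 2/5` can hold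
for the smallest strict majority dynamic monopoly of all `n`-vertex simple directed graphs
with positive minimum in-degree. -/
theorem no_strict_majority_bound_better_than_two_fifths :
    (∀ k : ℕ, 1 ≤ k →
      ∃ Adj : Fin (5 * k + 1) → Fin (5 * k + 1) → Prop,
        IsSimple Adj ∧ (∀ v, 1 ≤ inDeg Adj v) ∧
        ∀ M : Set (Fin (5 * k + 1)),
          IsDynamo Adj (strictMajority Adj) M → 2 * k ≤ M.ncard) ∧
    (∀ (c : ℝ) (f : ℕ → ℝ), f =o[Filter.atTop] (fun n => (n : ℝ)) →
      (∀ (n : ℕ) (Adj : Fin n → Fin n → Prop),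
        IsSimple Adj → (∀ v, 1 ≤ inDeg Adj v) →
        ∃ M : Set (Fin n), IsDynamo Adj (strictMajority Adj) M ∧
          (M.ncard : ℝ) ≤ c * n + f n) →
      (2 : ℝ) / 5 ≤ c) := by
  constructor
  · intro k hk
    exact ⟨gAdj k, gAdj_simple k, one_le_inDeg k hk, fun M hM => dynamo_lower k M hM⟩
  · intro c f hf hbound
    by_contra hc
    push_neg at hc
    set ε : ℝ := (2 - 5 * c) / 10 with hε
    have hεpos : 0 < ε := by rw [hε]; linarith
    have hev := hf.def hεpos
    rw [Filter.eventually_atTop] at hev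
    obtain ⟨N, hN⟩ := hev
    obtain ⟨K, hK⟩ : ∃ K : ℕ, (c + ε) / (5 * ε) < K := exists_nat_gt _
    set k := max (max N K) 1 with hkdef
    have hk1 : 1 ≤ k := le_max_right _ _
    obtain ⟨M, hMdyn, hMle⟩ :=
      hbound (5 * k + 1) (gAdj k) (gAdj_simple k) (one_le_inDeg k hk1)
    have h2k : 2 * k ≤ M.ncard := dynamo_lower k M hMdyn
    have hfk : ‖f (5 * k + 1)‖ ≤ ε * ‖((5 * k + 1 : ℕ) : ℝ)‖ := by
      apply hN
      have : N ≤ k := le_trans (le_max_left _ _) (le_max_left _ _)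
      omega
    have hfk' : f (5 * k + 1) ≤ ε * (5 * (k : ℝ) + 1) := by
      have h1 : f (5 * k + 1) ≤ ‖f (5 * k + 1)‖ := Real.le_norm_self _
      have h2 : ‖((5 * k + 1 : ℕ) : ℝ)‖ = 5 * (k : ℝ) + 1 := by
        rw [Real.norm_eq_abs, abs_of_nonneg (by positivity)]
        push_cast; ring
      rw [h2] at hfk
      linarith
    have hA : 2 * (k : ℝ) ≤ c * (5 * (k : ℝ) + 1) + ε * (5 * (k : ℝ) + 1) := by
      have h1 : ((2 * k : ℕ) : ℝ) ≤ (M.ncard : ℝ) := by exact_mod_cast h2k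
      have h2 : (M.ncard : ℝ) ≤ c * ((5 * k + 1 : ℕ) : ℝ) + f (5 * k + 1) := hMle
      push_cast at h1 h2
      linarith
    have hB : c + ε < 5 * ε * (k : ℝ) := by
      have hkK : (K : ℝ) ≤ (k : ℝ) := by
        exact_mod_cast le_trans (le_max_right N K) (le_max_left _ _)
      have : (c + ε) / (5 * ε) < (k : ℝ) := lt_of_lt_of_le hK hkK
      rw [div_lt_iff₀ (by positivity)] at this
      linarith
    have hC : 10 * ε * (k : ℝ) = (2 - 5 * c) * (k : ℝ) := by rw [hε]; ring
    nlinarith
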